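/- Let p be a prime number such that 2p + 1 is not prime. Let P ∈ ℤ[X] be a monic irreducible polynomial of degree p whose constant term is 1 or −1 and all of whose complex roots are real and positive. Then the largest root of P is strictly greater than 4 + 4^{−(2p+3)}. -/

import Mathlib

open Polynomial
open scoped NNReal
open IntermediateField

lemma totient_2p (p m : ℕ) (hp : p.Prime) (hp7 : 7 ≤ p) (h : m.totient = 2 * p) :
    (2 * p + 1).Prime := by
  have hm0 : m ≠ 0 := by rintro rfl; simp [Nat.totient_zero] at h; omega
  have hpd : p ∣ m.totient := h ▸ ⟨2, by ring⟩
  rw [Nat.totient_eq_prod_factorization hm0] at hpd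
  obtain ⟨q, hq, hdvd⟩ : ∃ q ∈ m.factorization.support, p ∣ q ^ (m.factorization q - 1) * (q - 1) := by
    classical
    exact (Prime.dvd_finset_prod_iff hp.prime _).mp hpd
  rw [Nat.support_factorization, Nat.mem_primeFactors] at hq
  obtain ⟨hqprime, hqm, -⟩ := hq
  rcases (Nat.Prime.dvd_mul hp).mp hdvd with h1 | h2
  · -- p ∣ q ^ (k-1), so p = q and k ≥ 2
    have hpq : p = q := (Nat.prime_dvd_prime_iff_eq hp hqprime).mp (hp.dvd_of_dvd_pow h1)
    have hk : 2 ≤ m.factorization q := by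
      by_contra hk
      interval_cases hk' : m.factorization q <;> simp_all
    have hsq : q ^ 2 ∣ m := by
      have := Nat.ordProj_dvd m q
      calc q ^ 2 ∣ q ^ m.factorization q := pow_dvd_pow _ hk
        _ ∣ m := Nat.ordProj_dvd m q
    have htd : (q ^ 2).totient ∣ m.totient := Nat.totient_dvd_of_dvd hsq
    rw [Nat.totient_prime_pow hqprime (by norm_num), h] at htd
    -- q * (q-1) ∣ 2p with q = p
    subst hpq
    have : p ∣ 2 * p := ⟨2, by ring⟩
    have h3 : p * (p-1) ∣ 2 * p := by simpa using htd
    have hle2 : p * (p - 1) ≤ 2 * p := Nat.le_of_dvd (by omega) h3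
    have : p * 6 ≤ p * (p - 1) := Nat.mul_le_mul_left _ (by omega)
    omega
  · -- p ∣ q - 1
    have hq1 : (q - 1) ∣ m.totient := by
      have := Nat.totient_dvd_of_dvd hqm
      rwa [Nat.totient_prime hqprime] at this
    rw [h] at hq1
    -- q - 1 ∣ 2p, p ∣ q - 1, q odd so 2 ∣ q - 1
    have hq2 : q ≠ 2 := by
      rintro rfl
      have := Nat.le_of_dvd (by norm_num) h2; omega
    have hqodd : ¬ 2 ∣ q := by
      intro h2q
      exact hq2 ((Nat.prime_dvd_prime_iff_eq Nat.prime_two hqprime).mp h2q).symm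
    have h2q1 : 2 ∣ q - 1 := by
      have := hqprime.two_le; omega
    have hple : p ≤ q - 1 := Nat.le_of_dvd (by have := hqprime.two_le; omega) h2
    have hle : q - 1 ≤ 2 * p := Nat.le_of_dvd (by omega) hq1
    -- q - 1 ∈ {p, 2p} multiples of p dividing 2p; even & p odd forces 2p
    have hpodd : ¬ 2 ∣ p := fun hd => by
      have := (Nat.prime_dvd_prime_iff_eq Nat.prime_two hp).mp hd; omega
    have h2pd : 2 * p ∣ q - 1 :=
      Nat.Coprime.mul_dvd_of_dvd_of_dvd ((Nat.coprime_primes Nat.prime_two hp).mpr (by omega)) h2q1 h2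
    have heq : q - 1 = 2 * p := Nat.dvd_antisymm hq1 h2pd
    have : q = 2 * p + 1 := by have := hqprime.two_le; omega
    rwa [← this]


/-- If `w² - b w + 1 = 0` with `b` real, `-2 < b < 2`, then `|w| = 1` and `w` is nonreal. -/
lemma quad_unit {b : ℝ} (hb1 : -2 < b) (hb2 : b < 2) {w : ℂ}
    (hw : w ^ 2 - (b : ℂ) * w + 1 = 0) : ‖w‖ = 1 ∧ w.im ≠ 0 := by
  have him : w.im ≠ 0 := by
    intro h0
    have hre : (w.re : ℂ) = w := Complex.ext rfl (by simp [h0])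
    rw [← hre] at hw
    have : (w.re ^ 2 - b * w.re + 1 : ℝ) = 0 := by
      have := congrArg Complex.re hw
      simpa [← Complex.ofReal_pow] using this
    nlinarith [sq_nonneg (2 * w.re - b), sq_nonneg w.re]
  have hconj : (starRingEnd ℂ) w ^ 2 - (b : ℂ) * (starRingEnd ℂ) w + 1 = 0 := by
    have := congrArg (starRingEnd ℂ) hw
    simpa [map_pow, Complex.conj_ofReal] using this
  set wb := (starRingEnd ℂ) w
  have hne : w - wb ≠ 0 := by
    simp only [sub_ne_zero]
    intro h
    have h2 := congrArg Complex.im h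
    simp only [wb, Complex.conj_im] at h2
    exact him (by linarith)
  have hsum : w + wb = (b : ℂ) := by
    have hfac : (w - wb) * (w + wb - b) = 0 := by ring_nf; linear_combination hw - hconj
    rcases mul_eq_zero.mp hfac with h | h
    · exact absurd h hne
    · linear_combination h
  have hprod : w * wb = 1 := by linear_combination -hw + w * hsum
  have : Complex.normSq w = 1 := by
    have := hprod
    rw [Complex.mul_conj] at this
    exact_mod_cast this
  refine ⟨?_, him⟩
  have := Complex.sq_norm w
  nlinarith [norm_nonneg w, Complex.sq_norm w]


set_option maxHeartbeats 1000000

/-- Let `p` be a prime such that `2 p + 1` is not prime, and let `P ∈ ℤ[X]` be a monic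
irreducible polynomial of degree `p` with constant term `±1` all of whose complex roots are
real and positive. Then the largest root of `P` is strictly greater than `4 + 4 ^ (-(2 p + 3))`. -/
theorem largest_root_gt (p : ℕ) (hp : p.Prime) (h2p : ¬ (2 * p + 1).Prime)
    (P : Polynomial ℤ) (hmonic : P.Monic) (hirr : Irreducible P) (hdeg : P.natDegree = p)
    (hconst : P.coeff 0 = 1 ∨ P.coeff 0 = -1)
    (hroots : ∀ z : ℂ, aeval z P = 0 → z.im = 0 ∧ 0 < z.re) :
    ∃ x : ℝ, aeval x P = 0 ∧ 4 + (4 : ℝ) ^ (-(2 * (p : ℤ) + 3)) < x ∧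
      ∀ y : ℝ, aeval y P = 0 → y ≤ x := by
  have hp2 : 2 ≤ p := hp.two_le
  -- the mapped polynomial over ℂ
  set Pc : Polynomial ℂ := P.map (algebraMap ℤ ℂ) with hPcdef
  have hPc : Pc.Monic := hmonic.map _
  have hPc0 : Pc ≠ 0 := hPc.ne_zero
  have hPcdeg : Pc.natDegree = p := by
    rw [hPcdef, hmonic.natDegree_map, hdeg]
  set M : Multiset ℂ := Pc.roots with hMdef
  have hMcard : Multiset.card M = p := by
    rw [hMdef, ← hPcdeg]
    exact Polynomial.splits_iff_card_roots.mp (IsAlgClosed.splits Pc)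
  have haePc : ∀ z : ℂ, aeval z P = Pc.eval z := by
    intro z
    rw [aeval_def, hPcdef, eval_map]
  have hmem : ∀ z : ℂ, z ∈ M → aeval z P = 0 := by
    intro z hz
    rw [haePc]
    exact (Polynomial.mem_roots'.mp hz).2
  have hmem' : ∀ z : ℂ, aeval z P = 0 → z ∈ M := by
    intro z hz
    rw [haePc] at hz
    exact Polynomial.mem_roots'.mpr ⟨hPc0, hz⟩
  -- real/complex root transfer
  have hRC : ∀ r : ℝ, (aeval r P : ℝ) = 0 ↔ aeval (r : ℂ) P = 0 := by
    intro r
    have h1 : aeval ((algebraMap ℝ ℂ) r) P = (algebraMap ℝ ℂ) (aeval r P) :=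
      Polynomial.aeval_algebraMap_apply ℂ r P
    rw [Complex.coe_algebraMap] at h1
    constructor
    · intro h; rw [h1, h]; simp
    · intro h; rw [h1] at h; exact_mod_cast h
  -- every root is real
  have hreal : ∀ z : ℂ, z ∈ M → z = (z.re : ℂ) := by
    intro z hz
    have := (hroots z (hmem z hz)).1
    exact Complex.ext (by simp) (by simp [this])
  -- the set of real parts of roots
  have hMne : M ≠ 0 := by
    intro h
    rw [h] at hMcard
    simp at hMcard
    omega
  set s : Finset ℝ := (M.map Complex.re).toFinset with hsdef
  have hsne : s.Nonempty := by
    rw [hsdef]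
    simp [Multiset.toFinset_nonempty]
    exact hMne
  set x : ℝ := s.max' hsne with hxdef
  obtain ⟨zx, hzxM, hzx⟩ : ∃ z ∈ M, z.re = x := by
    have hmem2 : x ∈ (M.map Complex.re).toFinset := by rw [← hsdef]; exact s.max'_mem hsne
    rw [Multiset.mem_toFinset] at hmem2
    obtain ⟨z, hzM, hz⟩ := Multiset.mem_map.mp hmem2
    exact ⟨z, hzM, hz⟩
  have hxroot : aeval x P = 0 := by
    rw [hRC]
    have := hmem zx hzxM
    rwa [hreal zx hzxM, hzx] at this
  have hmax : ∀ y : ℝ, aeval y P = 0 → y ≤ x := by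
    intro y hy
    have hyM : (y : ℂ) ∈ M := hmem' _ ((hRC y).mp hy)
    have : y ∈ s := by
      rw [hsdef, Multiset.mem_toFinset]
      exact Multiset.mem_map.mpr ⟨(y : ℂ), hyM, by simp⟩
    exact s.le_max' y this
  have hremax : ∀ z : ℂ, z ∈ M → z.re ≤ x := by
    intro z hz
    apply hmax
    rw [hRC]
    have := hmem z hz
    rwa [hreal z hz] at this
  have hxpos : 0 < x := by
    rw [← hzx]; exact (hroots zx (hmem zx hzxM)).2
  refine ⟨x, hxroot, ?_, hmax⟩
  by_contra hcon
  push_neg at hcon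
  set δ : ℝ := (4 : ℝ) ^ (-(2 * (p : ℤ) + 3)) with hδdef
  have hδpos : 0 < δ := by positivity
  have hδlt : δ < 1 := by
    rw [hδdef]
    apply zpow_lt_one_of_neg₀ (by norm_num)
    omega
  by_cases hbig : ∃ z ∈ M, (4 : ℝ) ≤ z.re
  · -- Case B : some root in [4, 4+δ]; |P(4)| < 1 contradiction
    obtain ⟨z₀, hz₀M, hz₀⟩ := hbig
    -- P(4) ≠ 0
    have heval4 : P.eval 4 ≠ 0 := by
      intro h
      have hdvd : (X - C (4 : ℤ)) ∣ P := Polynomial.dvd_iff_isRoot.mpr h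
      obtain ⟨q, hq⟩ := hdvd
      rcases hirr.isUnit_or_isUnit hq with hu | hu
      · exact (Polynomial.not_isUnit_X_sub_C (4 : ℤ)) hu
      · have hq0 : q.natDegree = 0 := Polynomial.natDegree_eq_zero_of_isUnit hu
        have hX0 : (X - C (4 : ℤ)) ≠ 0 := Polynomial.X_sub_C_ne_zero 4
        have hqne : q ≠ 0 := by rintro rfl; rw [mul_zero] at hq; exact hmonic.ne_zero hq
        have := Polynomial.natDegree_mul hX0 hqne
        rw [← hq, hdeg, Polynomial.natDegree_X_sub_C, hq0] at this
        omega
    -- |P(4)| as a product over the roots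
    have hfact : Pc = (M.map fun a => X - C a).prod :=
      ((IsAlgClosed.splits Pc).eq_prod_roots_of_monic hPc)
    have hev : Pc.eval 4 = (M.map fun a => (4 : ℂ) - a).prod := by
      conv_lhs => rw [hfact]
      rw [Polynomial.eval_multiset_prod, Multiset.map_map]
      congr 1
      apply Multiset.map_congr rfl
      intro z _
      simp
    have hnorm : ‖Pc.eval 4‖₊ = (M.map fun a => ‖(4 : ℂ) - a‖₊).prod := by
      rw [hev]
      have h := Multiset.prod_hom (M.map fun a => (4 : ℂ) - a) (nnnormHom (α := ℂ)).toMonoidHom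
      rw [Multiset.map_map] at h
      exact h.symm
    -- lower bound 1
    have hone : 1 ≤ ‖Pc.eval 4‖₊ := by
      have h4 : Pc.eval 4 = ((P.eval 4 : ℤ) : ℂ) := by
        rw [hPcdef, Polynomial.eval_map]
        simp [Polynomial.eval₂_at_apply]
      have h5 : ((1 : ℝ)) ≤ ‖((P.eval 4 : ℤ) : ℂ)‖ := by
        rw [Complex.norm_intCast]
        exact_mod_cast Int.one_le_abs (by exact_mod_cast heval4)
      rw [h4, ← NNReal.coe_le_coe]
      simpa [coe_nnnorm, Int.norm_eq_abs] using h5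
    -- upper bound
    have hz₀le : z₀.re ≤ 4 + δ := le_trans (hremax z₀ hz₀M) hcon
    have hfac0 : ‖(4 : ℂ) - z₀‖₊ ≤ δ.toNNReal := by
      have heq : (4 : ℂ) - z₀ = ((4 - z₀.re : ℝ) : ℂ) :=
        Complex.ext (by simp) (by simp [(hroots z₀ (hmem z₀ hz₀M)).1])
      have habs : ‖((4 - z₀.re : ℝ) : ℂ)‖ ≤ δ := by
        rw [Complex.norm_real, Real.norm_eq_abs, abs_le]
        constructor <;> [linarith; linarith]
      rw [heq, ← NNReal.coe_le_coe]
      simpa [coe_nnnorm, Real.coe_toNNReal _ hδpos.le] using habs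
    have hfacrest : ∀ z ∈ M.erase z₀, ‖(4 : ℂ) - z‖₊ ≤ 4 := by
      intro z hz
      have hzM : z ∈ M := Multiset.mem_of_mem_erase hz
      have h1 : 0 < z.re := (hroots z (hmem z hzM)).2
      have h2 : z.re ≤ 4 + δ := le_trans (hremax z hzM) hcon
      have heq : (4 : ℂ) - z = ((4 - z.re : ℝ) : ℂ) :=
        Complex.ext (by simp) (by simp [(hroots z (hmem z hzM)).1])
      have habs : ‖((4 - z.re : ℝ) : ℂ)‖ ≤ (4 : ℝ) := by
        rw [Complex.norm_real, Real.norm_eq_abs, abs_le]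
        constructor <;> [linarith; linarith]
      rw [heq, ← NNReal.coe_le_coe]
      simpa [coe_nnnorm] using habs
    have hsplit : M = z₀ ::ₘ M.erase z₀ := (Multiset.cons_erase hz₀M).symm
    have hub : (M.map fun a => ‖(4 : ℂ) - a‖₊).prod ≤ δ.toNNReal * 4 ^ (p - 1) := by
      conv_lhs => rw [hsplit]
      rw [Multiset.map_cons, Multiset.prod_cons]
      have hcard' : Multiset.card (M.erase z₀) = p - 1 := by
        rw [Multiset.card_erase_of_mem hz₀M, hMcard]; rfl
      have h2 : ((M.erase z₀).map fun a => ‖(4 : ℂ) - a‖₊).prod ≤ 4 ^ (p - 1) := by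
        have h3 := Multiset.prod_le_pow_card ((M.erase z₀).map fun a => ‖(4 : ℂ) - a‖₊) 4
          (by intro w hw; obtain ⟨z, hz, rfl⟩ := Multiset.mem_map.mp hw; exact hfacrest z hz)
        rwa [Multiset.card_map, hcard'] at h3
      exact mul_le_mul' hfac0 h2
    -- numeric contradiction
    have hfin : (1 : ℝ≥0) ≤ δ.toNNReal * 4 ^ (p - 1) := by
      rw [hnorm] at hone
      exact le_trans hone hub
    rw [← NNReal.coe_le_coe] at hfin
    push_cast [Real.coe_toNNReal _ hδpos.le] at hfin
    have hlt : δ * 4 ^ (p - 1) < 1 := by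
      have h48 : δ * 4 ^ (p - 1) = (4:ℝ) ^ (-(2 * (p:ℤ) + 3) + ((p:ℤ) - 1)) := by
        rw [hδdef, zpow_add₀ (by norm_num : (4:ℝ) ≠ 0)]
        congr 1
        rw [← zpow_natCast]
        congr 1
        omega
      rw [h48]
      apply zpow_lt_one_of_neg₀ (by norm_num)
      omega
    linarith
  · -- Case A : all roots < 4 : Kronecker argument
    push_neg at hbig
    have hx4 : x < 4 := by rw [← hzx]; exact hbig zx hzxM
    have hp7 : 7 ≤ p := by
      by_contra h
      push_neg at h
      interval_cases p <;> revert hp h2p <;> decide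
    -- the auxiliary nonreal algebraic integer y with y + 2 + y⁻¹ = x
    have hxq : (x - 2) ^ 2 < 4 := by nlinarith
    set yim : ℝ := Real.sqrt (4 - (x - 2) ^ 2) / 2 with hyimdef
    have hyimpos : 0 < yim := by
      rw [hyimdef]
      have : 0 < Real.sqrt (4 - (x - 2) ^ 2) := Real.sqrt_pos.mpr (by linarith)
      linarith
    have hyimsq : yim ^ 2 = (4 - (x - 2) ^ 2) / 4 := by
      rw [hyimdef, div_pow, Real.sq_sqrt (by linarith : (0:ℝ) ≤ 4 - (x - 2) ^ 2)]
      norm_num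
    set y : ℂ := ((x - 2) / 2 : ℝ) + (yim : ℝ) * Complex.I with hydef
    have hyre : y.re = (x - 2) / 2 := by simp [hydef]
    have hyim' : y.im = yim := by simp [hydef]
    have hyquad : y ^ 2 - ((x : ℂ) - 2) * y + 1 = 0 := by
      apply Complex.ext
      · simp only [Complex.add_re, Complex.sub_re, Complex.mul_re, Complex.one_re,
          Complex.zero_re, Complex.sub_im, Complex.ofReal_re, Complex.ofReal_im,
          pow_two, Complex.mul_im, Complex.re_ofNat, Complex.im_ofNat, hyre, hyim']
        nlinarith [hyimsq]
      · simp only [Complex.add_im, Complex.sub_im, Complex.mul_im, Complex.one_im,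
          Complex.zero_im, Complex.mul_re, Complex.sub_re, Complex.ofReal_re,
          Complex.ofReal_im, pow_two, Complex.re_ofNat, Complex.im_ofNat, hyre, hyim']
        ring
    have hyquad' : y ^ 2 - ((x - 2 : ℝ) : ℂ) * y + 1 = 0 := by
      push_cast
      exact hyquad
    obtain ⟨hyabs, hyimne⟩ := quad_unit (by linarith : (-2:ℝ) < x - 2) (by linarith) hyquad'
    have hy0 : y ≠ 0 := by
      intro h
      rw [h] at hyabs
      simp at hyabs
    have hysum : y + 2 + y⁻¹ = (x : ℂ) := by
      field_simp
      linear_combination hyquad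
    -- the auxiliary polynomial g(T) = T^p · P(T + 2 + T⁻¹)
    set g : Polynomial ℤ :=
      ∑ k ∈ Finset.range (p + 1), C (P.coeff k) * (X + 1) ^ (2 * k) * X ^ (p - k) with hgdef
    have htermdeg : ∀ k, k ≤ p →
        (C (P.coeff k) * (X + 1) ^ (2 * k) * (X:Polynomial ℤ) ^ (p - k)).natDegree ≤ p + k := by
      intro k hk
      apply (Polynomial.natDegree_mul_le).trans
      have h1 : (C (P.coeff k) * (X + 1) ^ (2 * k) : Polynomial ℤ).natDegree ≤ 2 * k := by
        apply (Polynomial.natDegree_mul_le).trans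
        have h2 : ((X + 1 : Polynomial ℤ) ^ (2 * k)).natDegree ≤ 2 * k := by
          apply (Polynomial.natDegree_pow _ _).le.trans
          rw [show (X + 1 : Polynomial ℤ) = X + C 1 by simp, Polynomial.natDegree_X_add_C]
          omega
        simpa [Polynomial.natDegree_C] using h2
      have h3 : ((X : Polynomial ℤ) ^ (p - k)).natDegree ≤ p - k := by
        simp [Polynomial.natDegree_X_pow]
      omega
    have hgdeg : g.natDegree ≤ 2 * p := by
      rw [hgdef]
      apply Polynomial.natDegree_sum_le_of_forall_le
      intro k hk
      rw [Finset.mem_range] at hk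
      exact (htermdeg k (by omega)).trans (by omega)
    have hgcoeff : g.coeff (2 * p) = 1 := by
      rw [hgdef, Polynomial.finset_sum_coeff]
      rw [Finset.sum_eq_single p]
      · have hPp : P.coeff p = 1 := by
          have := hmonic.coeff_natDegree
          rwa [hdeg] at this
        rw [hPp, Nat.sub_self, pow_zero, mul_one, map_one, one_mul]
        have hm : ((X + 1 : Polynomial ℤ) ^ (2 * p)).Monic := by
          have : (X + 1 : Polynomial ℤ).Monic := by
            rw [show (X + 1 : Polynomial ℤ) = X + C 1 by simp]
            exact Polynomial.monic_X_add_C 1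
          exact this.pow _
        have hdeg2 : ((X + 1 : Polynomial ℤ) ^ (2 * p)).natDegree = 2 * p := by
          rw [Polynomial.natDegree_pow, show (X + 1 : Polynomial ℤ) = X + C 1 by simp,
            Polynomial.natDegree_X_add_C]
          omega
        have := hm.coeff_natDegree
        rwa [hdeg2] at this
      · intro k hk hkney
        rw [Finset.mem_range] at hk
        apply Polynomial.coeff_eq_zero_of_natDegree_lt
        have := htermdeg k (by omega)
        omega
      · intro h
        simp at h
    have hgmonic : g.Monic := Polynomial.monic_of_natDegree_le_of_coeff_eq_one _ hgdeg hgcoeff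
    have hgndeg : g.natDegree = 2 * p := by
      have h1 : 2 * p ≤ g.natDegree := Polynomial.le_natDegree_of_ne_zero (by rw [hgcoeff]; norm_num)
      omega
    -- evaluation identity over ℂ
    have hgeval : ∀ w : ℂ, w ≠ 0 →
        (g.map (algebraMap ℤ ℂ)).eval w = w ^ p * Pc.eval (w + 2 + w⁻¹) := by
      intro w hw
      rw [hgdef]
      rw [Polynomial.map_sum]
      rw [Polynomial.eval_finset_sum]
      have hPceval : Pc.eval (w + 2 + w⁻¹)
          = ∑ k ∈ Finset.range (p + 1), (algebraMap ℤ ℂ) (P.coeff k) * (w + 2 + w⁻¹) ^ k := by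
        rw [Polynomial.eval_eq_sum_range' (by rw [hPcdeg]; omega : Pc.natDegree < p + 1)]
        apply Finset.sum_congr rfl
        intro k hk
        rw [hPcdef, Polynomial.coeff_map]
      rw [hPceval, Finset.mul_sum]
      apply Finset.sum_congr rfl
      intro k hk
      rw [Finset.mem_range] at hk
      have hkp : k ≤ p := by omega
      simp only [Polynomial.map_mul, Polynomial.map_pow, Polynomial.map_add, Polynomial.map_one,
        Polynomial.map_C, Polynomial.map_X, Polynomial.eval_mul, Polynomial.eval_pow,
        Polynomial.eval_add, Polynomial.eval_one, Polynomial.eval_C, Polynomial.eval_X]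
      have h1 : (w + 2 + w⁻¹) * w = (w + 1) ^ 2 := by
        field_simp
        ring
      have h2 : (w + 2 + w⁻¹) ^ k * w ^ k = (w + 1) ^ (2 * k) := by
        rw [← mul_pow, h1, ← pow_mul]
      have h3 : w ^ (p - k) * w ^ k = w ^ p := by
        rw [← pow_add]
        congr 1
        omega
      calc (algebraMap ℤ ℂ) (P.coeff k) * (w + 1) ^ (2 * k) * w ^ (p - k)
          = (algebraMap ℤ ℂ) (P.coeff k) * ((w + 2 + w⁻¹) ^ k * w ^ k) * w ^ (p - k) := by
            rw [h2]
        _ = (algebraMap ℤ ℂ) (P.coeff k) * (w + 2 + w⁻¹) ^ k * (w ^ (p - k) * w ^ k) := by ring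
        _ = w ^ p * ((algebraMap ℤ ℂ) (P.coeff k) * (w + 2 + w⁻¹) ^ k) := by rw [h3]; ring
    have hg0eval : (g.map (algebraMap ℤ ℂ)).eval 0 = 1 := by
      rw [hgdef, Polynomial.map_sum, Polynomial.eval_finset_sum]
      rw [Finset.sum_eq_single p]
      · have hPp : P.coeff p = 1 := by
          have := hmonic.coeff_natDegree
          rwa [hdeg] at this
        simp [hPp]
      · intro k hk hkne
        rw [Finset.mem_range] at hk
        simp only [Polynomial.map_mul, Polynomial.map_pow, Polynomial.map_add, Polynomial.map_one,
          Polynomial.map_C, Polynomial.map_X, Polynomial.eval_mul, Polynomial.eval_pow,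
          Polynomial.eval_add, Polynomial.eval_one, Polynomial.eval_C, Polynomial.eval_X]
        rw [zero_pow (by omega : p - k ≠ 0)]
        ring
      · intro h
        simp at h
    -- y is a root of g
    have hgyC : (g.map (algebraMap ℤ ℂ)).eval y = 0 := by
      rw [hgeval y hy0, hysum]
      have : Pc.eval (x : ℂ) = 0 := by
        rw [← haePc]
        exact (hRC x).mp hxroot
      rw [this, mul_zero]
    have hy_int : IsIntegral ℤ y := ⟨g, hgmonic, by rwa [← Polynomial.eval_map]⟩
    have hyQ : IsIntegral ℚ y := hy_int.tower_top
    set gq : Polynomial ℚ := g.map (algebraMap ℤ ℚ) with hgqdef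
    have hgq0 : gq ≠ 0 := (hgmonic.map (algebraMap ℤ ℚ)).ne_zero
    have hgqdeg : gq.natDegree = 2 * p := by
      rw [hgqdef, hgmonic.natDegree_map, hgndeg]
    have hμdvd : minpoly ℚ y ∣ gq := by
      apply minpoly.dvd ℚ y
      rw [hgqdef, Polynomial.aeval_map_algebraMap]
      rwa [aeval_def, ← Polynomial.eval_map]
    -- all roots of gq have modulus one and are nonreal
    have hmapcomp : gq.map (algebraMap ℚ ℂ) = g.map (algebraMap ℤ ℂ) := by
      rw [hgqdef, Polynomial.map_map, ← IsScalarTower.algebraMap_eq]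
    have hrootsg : ∀ w : ℂ, aeval w gq = 0 → ‖w‖ = 1 ∧ w.im ≠ 0 := by
      intro w hwe
      rw [aeval_def, ← Polynomial.eval_map, hmapcomp] at hwe
      have hw0 : w ≠ 0 := by
        rintro rfl
        rw [hg0eval] at hwe
        exact one_ne_zero hwe
      rw [hgeval w hw0] at hwe
      rcases mul_eq_zero.mp hwe with h | h
      · exact absurd (pow_eq_zero_iff (by omega : p ≠ 0) |>.mp h) hw0
      · set β := w + 2 + w⁻¹ with hβdef
        have hβroot : aeval β P = 0 := by rw [haePc]; exact h
        have hβM : β ∈ M := hmem' β hβroot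
        have hβim : β.im = 0 := (hroots β hβroot).1
        have hβpos : 0 < β.re := (hroots β hβroot).2
        have hβlt : β.re < 4 := hbig β hβM
        have hβre : β = ((β.re : ℝ) : ℂ) := hreal β hβM
        have hq : w ^ 2 - (β - 2) * w + 1 = 0 := by
          rw [hβdef]
          field_simp
          ring
        have hq' : w ^ 2 - ((β.re - 2 : ℝ) : ℂ) * w + 1 = 0 := by
          push_cast
          rw [← hβre]
          exact hq
        exact quad_unit (by linarith : (-2:ℝ) < β.re - 2) (by linarith) hq'
    -- pass to the number field ℚ(y)
    have hconj : ∀ w : ℂ, aeval w (minpoly ℚ y) = 0 → ‖w‖ = 1 ∧ w.im ≠ 0 := by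
      intro w hw
      apply hrootsg
      obtain ⟨c, hc⟩ := hμdvd
      rw [hc, map_mul, hw, zero_mul]
    -- the number field ℚ(y)
    have hyQ' := hyQ
    let K : IntermediateField ℚ ℂ := ℚ⟮ y ⟯
    haveI : FiniteDimensional ℚ K := IntermediateField.adjoin.finiteDimensional hyQ
    haveI : NumberField K := ⟨⟩
    let yhat : K := IntermediateField.AdjoinSimple.gen ℚ y
    have hgen : algebraMap K ℂ yhat = y := IntermediateField.AdjoinSimple.algebraMap_gen ℚ y
    have hyhat_int : IsIntegral ℤ yhat := by
      rw [← isIntegral_algebraMap_iff (algebraMap K ℂ).injective, hgen]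
      exact hy_int
    have hmineq : minpoly ℚ yhat = minpoly ℚ y := by
      rw [← hgen, minpoly.algebraMap_eq (algebraMap K ℂ).injective]
    have hnorm1 : ∀ φ : K →+* ℂ, ‖φ yhat‖ = 1 := by
      intro φ
      let ψ : K →ₐ[ℚ] ℂ := RingHom.equivRatAlgHom K ℂ φ
      have hψ : ∀ a : K, ψ a = φ a := fun a => rfl
      have haev : aeval (φ yhat) (minpoly ℚ y) = 0 := by
        rw [← hψ, ← hmineq]
        rw [Polynomial.aeval_algHom_apply ψ yhat (minpoly ℚ yhat)]
        rw [minpoly.aeval, map_zero]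
      have := (hconj (φ yhat) haev).1
      exact this
    obtain ⟨n, hn, hpow⟩ := NumberField.Embeddings.pow_eq_one_of_norm_eq_one K ℂ hyhat_int hnorm1
    have hypow : y ^ n = 1 := by
      have := congrArg (algebraMap K ℂ) hpow
      rw [map_pow, hgen, map_one] at this
      exact this
    -- y is a primitive root of unity of some order m
    have hyfin : IsOfFinOrder y := isOfFinOrder_iff_pow_eq_one.mpr ⟨n, hn, hypow⟩
    set m : ℕ := orderOf y with hmdef
    have hm0 : 0 < m := hyfin.orderOf_pos
    have hprim : IsPrimitiveRoot y m := IsPrimitiveRoot.orderOf y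
    have hcyc : Polynomial.cyclotomic m ℚ = minpoly ℚ y :=
      Polynomial.cyclotomic_eq_minpoly_rat hprim hm0
    have hdtot : (minpoly ℚ y).natDegree = m.totient := by
      rw [← hcyc, Polynomial.natDegree_cyclotomic]
    set d : ℕ := (minpoly ℚ y).natDegree with hddef
    have hd2p : d ≤ 2 * p := by
      have := Polynomial.natDegree_le_of_dvd hμdvd hgq0
      rwa [hgqdeg] at this
    have hdpos : 0 < d := minpoly.natDegree_pos hyQ
    -- p divides d via the subfield ℚ(x)
    have hyK : y ∈ K := IntermediateField.mem_adjoin_simple_self ℚ y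
    have hxK : (x : ℂ) ∈ K := by
      have h2K : (2 : ℂ) ∈ K := by
        have := IntermediateField.algebraMap_mem K (2 : ℚ)
        simpa using this
      have hmem3 : y + 2 + y⁻¹ ∈ K := add_mem (add_mem hyK h2K) (inv_mem hyK)
      rwa [hysum] at hmem3
    let xhat : K := ⟨(x : ℂ), hxK⟩
    have hxhat_map : algebraMap K ℂ xhat = (x : ℂ) := rfl
    set Pq : Polynomial ℚ := P.map (algebraMap ℤ ℚ) with hPqdef
    have hPq_monic : Pq.Monic := hmonic.map _
    have hPq_irr : Irreducible Pq :=
      (Polynomial.IsPrimitive.Int.irreducible_iff_irreducible_map_cast hmonic.isPrimitive).mp hirr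
    have hPq_deg : Pq.natDegree = p := by rw [hPqdef, hmonic.natDegree_map, hdeg]
    have haevx : aeval xhat Pq = 0 := by
      have hinj := (algebraMap K ℂ).injective
      apply hinj
      rw [map_zero]
      have h1 : algebraMap K ℂ (aeval xhat Pq) = aeval (algebraMap K ℂ xhat) Pq :=
        (Polynomial.aeval_algebraMap_apply ℂ xhat Pq).symm
      rw [h1, hxhat_map, hPqdef, Polynomial.aeval_map_algebraMap]
      exact (hRC x).mp hxroot
    have hμx : minpoly ℚ xhat = Pq :=
      (minpoly.eq_of_irreducible_of_monic hPq_irr haevx hPq_monic).symm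
    have hfr : Module.finrank ℚ K = d := by
      rw [hddef, ← IntermediateField.adjoin.finrank hyQ]
    have hxhat_intQ : IsIntegral ℚ xhat := IsIntegral.of_finite ℚ xhat
    have hpd : p ∣ d := by
      have := minpoly.degree_dvd hxhat_intQ
      rwa [hμx, hPq_deg, hfr] at this
    -- d is even since m ≥ 3
    have hm3 : 3 ≤ m := by
      rcases Nat.lt_or_ge m 3 with h | h
      · exfalso
        interval_cases m
        · have : y = 1 := by
            have := hprim.pow_eq_one
            simpa using this
          rw [this] at hyimne
          simp at hyimne
        · have hy2 : y ^ 2 = 1 := by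
            have := hprim.pow_eq_one
            simpa using this
          have : (y - 1) * (y + 1) = 0 := by linear_combination hy2
          rcases mul_eq_zero.mp this with h' | h'
          · have : y = 1 := by linear_combination h'
            rw [this] at hyimne
            simp at hyimne
          · have : y = -1 := by linear_combination h'
            rw [this] at hyimne
            simp at hyimne
      · exact h
    have heven : Even d := by
      rw [hdtot]
      exact Nat.totient_even (by omega)
    -- conclude d = 2p and m.totient = 2p
    have hpodd : ¬ (2 ∣ p) := by
      intro h2
      have := (Nat.prime_dvd_prime_iff_eq Nat.prime_two hp).mp h2
      omega
    obtain ⟨t, ht⟩ := hpd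
    have htle : t ≤ 2 := by
      by_contra hlt
      push_neg at hlt
      have : 3 * p ≤ p * t := by
        calc 3 * p = p * 3 := by ring
          _ ≤ p * t := Nat.mul_le_mul_left p hlt
      omega
    have ht0 : t ≠ 0 := by rintro rfl; omega
    have ht1 : t ≠ 1 := by
      rintro rfl
      rw [mul_one] at ht
      rw [ht] at heven
      rcases heven with ⟨u, hu⟩
      exact hpodd ⟨u, by omega⟩
    have ht2 : t = 2 := by omega
    have htd : d = 2 * p := by rw [ht, ht2]; ring
    have htot : m.totient = 2 * p := by rw [← hdtot]; exact htd
    exact h2p (totient_2p p m hp hp7 htot)
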